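/- Hard SVR limiting risk at vanishing sample ratio: let G be a standard Gaussian, N independent of G with a symmetric distribution satisfying E[N²] < ∞, let σ > 0, ε ≥ 0, β > 0, and define D_δ(γ̃₁, γ̃₂) = √δ · √(E[((|√(γ̃₁²+γ̃₂²)·G + N| − ε/σ)₊)²]) − γ̃₁. For all sufficiently small δ > 0 the set {D_δ ≤ 0} is nonempty, and the unique minimizer (γ̃₁⋆(δ), γ̃₂⋆(δ)) of ½(γ̃₂ − β/σ)² + ½γ̃₁² over {(γ̃₁, γ̃₂) : D_δ(γ̃₁, γ̃₂) ≤ 0} satisfies γ̃₁⋆(δ) → 0 and γ̃₂⋆(δ) → β/σ as δ → 0⁺; consequently the asymptotic risk σ²((γ̃₁⋆(δ))² + (γ̃₂⋆(δ))²) converges to β², the risk of the null estimator. -/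

import Mathlib

open MeasureTheory ProbabilityTheory Filter Topology

open Real
open scoped NNReal

lemma gauss_mom2 : Integrable (fun x : ℝ => x ^ 2) (gaussianReal 0 1) := by
  rw [gaussianReal_of_var_ne_zero _ one_ne_zero,
    integrable_withDensity_iff (measurable_gaussianPDF _ _)
      (ae_of_all _ fun x => ENNReal.ofReal_lt_top)]
  have h : ∀ x : ℝ, (gaussianPDF 0 1 x).toReal = gaussianPDFReal 0 1 x := fun x =>
    ENNReal.toReal_ofReal (gaussianPDFReal_nonneg _ _ x)
  simp_rw [h, gaussianPDFReal]
  have hI := (integrable_rpow_mul_exp_neg_mul_sq (b := 1/2) (s := 2) (by norm_num)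
    (by norm_num)).const_mul (√(2*π*((1:ℝ≥0):ℝ)))⁻¹
  refine hI.congr (ae_of_all _ fun x => ?_)
  have h2 : x ^ (2:ℝ) = x ^ (2:ℕ) := by
    rw [show ((2:ℝ)) = ((2:ℕ):ℝ) by norm_num, Real.rpow_natCast]
  simp only [h2]
  push_cast
  ring_nf

section prodmom
variable (ν : Measure ℝ) [IsProbabilityMeasure ν]

lemma sqmeas {μ : Measure ℝ} : AEStronglyMeasurable (fun x : ℝ => x ^ 2) μ :=
  Measurable.aestronglyMeasurable (by fun_prop)

lemma map_fst_eq : ((gaussianReal 0 1).prod ν).map Prod.fst = gaussianReal 0 1 := by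
  rw [Measure.map_fst_prod]; simp

lemma map_snd_eq : ((gaussianReal 0 1).prod ν).map Prod.snd = ν := by
  rw [Measure.map_snd_prod]; simp

lemma int1 : Integrable (fun z : ℝ × ℝ => z.1 ^ 2) ((gaussianReal 0 1).prod ν) := by
  have h : Integrable (fun x : ℝ => x ^ 2) (((gaussianReal 0 1).prod ν).map Prod.fst) := by
    rw [map_fst_eq ν]; exact gauss_mom2
  exact (integrable_map_measure sqmeas measurable_fst.aemeasurable).mp h

lemma int2 (hνmom : Integrable (fun x => x ^ 2) ν) :
    Integrable (fun z : ℝ × ℝ => z.2 ^ 2) ((gaussianReal 0 1).prod ν) := by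
  have h : Integrable (fun x : ℝ => x ^ 2) (((gaussianReal 0 1).prod ν).map Prod.snd) := by
    rw [map_snd_eq ν]; exact hνmom
  exact (integrable_map_measure sqmeas measurable_snd.aemeasurable).mp h

lemma ival1 : ∫ z : ℝ × ℝ, z.1 ^ 2 ∂((gaussianReal 0 1).prod ν)
    = ∫ x : ℝ, x ^ 2 ∂(gaussianReal 0 1) := by
  conv_rhs => rw [← map_fst_eq ν]
  rw [integral_map (f := fun x : ℝ => x ^ 2) measurable_fst.aemeasurable sqmeas]

lemma ival2 : ∫ z : ℝ × ℝ, z.2 ^ 2 ∂((gaussianReal 0 1).prod ν)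
    = ∫ x : ℝ, x ^ 2 ∂ν := by
  conv_rhs => rw [← map_snd_eq ν]
  rw [integral_map (f := fun x : ℝ => x ^ 2) measurable_snd.aemeasurable sqmeas]

end prodmom


set_option maxHeartbeats 1000000 in
/-- **Hard SVR limiting risk at vanishing sample ratio.** With
`D_δ(γ̃₁, γ̃₂) = √δ √(E[((|√(γ̃₁²+γ̃₂²)G + N| - ε/σ)₊)²]) - γ̃₁`, for all sufficiently small
`δ > 0` the set `{D_δ ≤ 0}` is nonempty, and any selection `γ⋆(δ)` of the minimizer of
`½(γ̃₂ - β/σ)² + ½γ̃₁²` over `{D_δ ≤ 0}` satisfies `γ̃₁⋆(δ) → 0`, `γ̃₂⋆(δ) → β/σ` as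
`δ → 0⁺`; consequently the asymptotic risk `σ²(γ̃₁⋆(δ)² + γ̃₂⋆(δ)²)` converges to `β²`. -/
theorem hsvr_risk_vanishing_sample_ratio
    (ν : Measure ℝ) [IsProbabilityMeasure ν]
    (hνsymm : ν.map (fun x => -x) = ν)
    (hνmom : Integrable (fun x => x ^ 2) ν)
    (σ ε β : ℝ) (hσ : 0 < σ) (hε : 0 ≤ ε) (hβ : 0 < β)
    (D : ℝ → ℝ × ℝ → ℝ)
    (hD : D = fun δ g => Real.sqrt δ * Real.sqrt (∫ z : ℝ × ℝ,
        (max (|Real.sqrt (g.1 ^ 2 + g.2 ^ 2) * z.1 + z.2| - ε / σ) 0) ^ 2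
          ∂((gaussianReal 0 1).prod ν)) - g.1) :
    ∃ δ₀ : ℝ, 0 < δ₀ ∧
      (∀ δ ∈ Set.Ioo (0 : ℝ) δ₀, {g : ℝ × ℝ | D δ g ≤ 0}.Nonempty) ∧
      ∀ γsel : ℝ → ℝ × ℝ,
        (∀ δ ∈ Set.Ioo (0 : ℝ) δ₀, D δ (γsel δ) ≤ 0 ∧
          ∀ g : ℝ × ℝ, D δ g ≤ 0 →
            (1 / 2) * ((γsel δ).2 - β / σ) ^ 2 + (1 / 2) * (γsel δ).1 ^ 2 ≤
            (1 / 2) * (g.2 - β / σ) ^ 2 + (1 / 2) * g.1 ^ 2) →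
        Tendsto (fun δ => (γsel δ).1) (𝓝[>] 0) (𝓝 0) ∧
        Tendsto (fun δ => (γsel δ).2) (𝓝[>] 0) (𝓝 (β / σ)) ∧
        Tendsto (fun δ => σ ^ 2 * ((γsel δ).1 ^ 2 + (γsel δ).2 ^ 2)) (𝓝[>] 0)
          (𝓝 (β ^ 2)) := by
  set A := ∫ x : ℝ, x ^ 2 ∂(gaussianReal 0 1) with hAdef
  set m := ∫ x : ℝ, x ^ 2 ∂ν with hmdef
  have hA : 0 ≤ A := integral_nonneg fun x => sq_nonneg x
  have hm : 0 ≤ m := integral_nonneg fun x => sq_nonneg x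
  set C := 2*A*(β/σ)^2 + 2*m with hCdef
  have hC : 0 ≤ C := by positivity
  set K := Real.sqrt (2*C+1) with hKdef
  have hK2 : K^2 = 2*C+1 := Real.sq_sqrt (by positivity)
  have hK0 : 0 < K := Real.sqrt_pos.mpr (by positivity)
  have hδ₀ : 0 < (C+1)/(2*A*(2*C+1)+1) := by positivity
  clear_value K
  clear_value C
  clear_value A m
  have key : ∀ g : ℝ × ℝ, (∫ z : ℝ × ℝ,
        (max (|Real.sqrt (g.1 ^ 2 + g.2 ^ 2) * z.1 + z.2| - ε / σ) 0) ^ 2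
          ∂((gaussianReal 0 1).prod ν)) ≤ 2*(g.1^2+g.2^2)*A + 2*m := by
      intro g
      set r := Real.sqrt (g.1^2+g.2^2) with hrdef
      have hr2 : r^2 = g.1^2+g.2^2 := Real.sq_sqrt (by positivity)
      have hεσ : 0 ≤ ε/σ := div_nonneg hε hσ.le
      have hbound : ∀ z : ℝ × ℝ, (max (|r * z.1 + z.2| - ε/σ) 0)^2
          ≤ 2*(g.1^2+g.2^2)*z.1^2 + 2*z.2^2 := by
        intro z
        have hle : max (|r*z.1+z.2| - ε/σ) 0 ≤ |r*z.1| + |z.2| := by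
          refine max_le ?_ (by positivity)
          calc |r*z.1+z.2| - ε/σ ≤ |r*z.1+z.2| := by linarith
            _ ≤ |r*z.1| + |z.2| := abs_add_le _ _
        have h0 : (0:ℝ) ≤ max (|r*z.1+z.2| - ε/σ) 0 := le_max_right _ _
        have hsq := pow_le_pow_left₀ h0 hle 2
        have habs : (|r*z.1| + |z.2|)^2 ≤ 2*(r*z.1)^2 + 2*z.2^2 := by
          nlinarith [sq_nonneg (|r*z.1| - |z.2|), sq_abs (r*z.1), sq_abs z.2,
            abs_nonneg (r*z.1), abs_nonneg z.2]
        have heq : 2*(r*z.1)^2 = 2*(g.1^2+g.2^2)*z.1^2 := by rw [mul_pow, ← hr2]; ring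
        linarith [hsq, habs]
      have hgint : Integrable (fun z : ℝ × ℝ => 2*(g.1^2+g.2^2)*z.1^2 + 2*z.2^2)
          ((gaussianReal 0 1).prod ν) := ((int1 ν).const_mul _).add ((int2 ν hνmom).const_mul _)
      calc ∫ z : ℝ × ℝ, (max (|r * z.1 + z.2| - ε/σ) 0)^2 ∂((gaussianReal 0 1).prod ν)
          ≤ ∫ z : ℝ × ℝ, 2*(g.1^2+g.2^2)*z.1^2 + 2*z.2^2 ∂((gaussianReal 0 1).prod ν) :=
            integral_mono_of_nonneg (ae_of_all _ fun z => by positivity) hgint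
              (ae_of_all _ hbound)
        _ = 2*(g.1^2+g.2^2)*A + 2*m := by
            rw [integral_add ((int1 ν).const_mul _) ((int2 ν hνmom).const_mul _),
              integral_const_mul, integral_const_mul, ival1 ν, ival2 ν, ← hAdef, ← hmdef]
  have hfeas : ∀ δ ∈ Set.Ioo (0:ℝ) ((C+1)/(2*A*(2*C+1)+1)),
      D δ (Real.sqrt δ * K, β/σ) ≤ 0 := by
    intro δ hδ
    obtain ⟨hδ0, hδ1⟩ := hδ
    have hδd : δ * (2*A*(2*C+1)+1) < C+1 := by
      rw [lt_div_iff₀ (by positivity)] at hδ1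
      linarith
    have hwsq : ((Real.sqrt δ * K)^2 + (β/σ)^2) = δ*K^2 + (β/σ)^2 := by
      rw [mul_pow, Real.sq_sqrt hδ0.le]
    have hkey := key (Real.sqrt δ * K, β/σ)
    simp only at hkey
    rw [hwsq] at hkey
    have hle2 : 2*(δ*K^2+(β/σ)^2)*A + 2*m ≤ K^2 := by
      rw [hK2]
      nlinarith [hδd, hδ0.le, hA, hC, hCdef]
    have hsqrt : Real.sqrt (∫ z : ℝ × ℝ,
        (max (|Real.sqrt (δ*K^2 + (β/σ)^2) * z.1 + z.2| - ε / σ) 0) ^ 2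
          ∂((gaussianReal 0 1).prod ν)) ≤ K := by
      have := Real.sqrt_le_sqrt (le_trans hkey hle2)
      rwa [Real.sqrt_sq hK0.le] at this
    rw [hD]
    simp only
    rw [hwsq]
    have := mul_le_mul_of_nonneg_left hsqrt (Real.sqrt_nonneg δ)
    linarith [this]
  refine ⟨(C+1)/(2*A*(2*C+1)+1), hδ₀, fun δ hδ => ⟨(Real.sqrt δ * K, β/σ), hfeas δ hδ⟩, ?_⟩
  intro γsel hγ
  have hbnd : ∀ δ ∈ Set.Ioo (0:ℝ) ((C+1)/(2*A*(2*C+1)+1)),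
      |(γsel δ).1| ≤ Real.sqrt δ * K ∧ |(γsel δ).2 - β/σ| ≤ Real.sqrt δ * K := by
    intro δ hδ
    obtain ⟨hfe, hmin⟩ := hγ δ hδ
    have h1 := hmin _ (hfeas δ hδ)
    simp only at h1
    have hsq : (Real.sqrt δ * K)^2 = δ * K^2 := by rw [mul_pow, Real.sq_sqrt hδ.1.le]
    have hobj1 : (γsel δ).1^2 ≤ δ*K^2 := by nlinarith [h1, sq_nonneg ((γsel δ).2 - β/σ)]
    have hobj2 : ((γsel δ).2-β/σ)^2 ≤ δ*K^2 := by nlinarith [h1, sq_nonneg (γsel δ).1]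
    have hs : Real.sqrt (δ*K^2) = Real.sqrt δ * K := by
      rw [Real.sqrt_mul hδ.1.le, Real.sqrt_sq hK0.le]
    constructor
    · rw [← Real.sqrt_sq_eq_abs, ← hs]; exact Real.sqrt_le_sqrt hobj1
    · rw [← Real.sqrt_sq_eq_abs, ← hs]; exact Real.sqrt_le_sqrt hobj2
  have hmem : Set.Ioo (0:ℝ) ((C+1)/(2*A*(2*C+1)+1)) ∈ 𝓝[>] (0:ℝ) :=
    Ioo_mem_nhdsGT_of_mem ⟨le_refl 0, hδ₀⟩
  have hb : Tendsto (fun δ : ℝ => Real.sqrt δ * K) (𝓝[>] (0:ℝ)) (𝓝 0) := by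
    have h := (Real.continuous_sqrt.tendsto 0).mul (tendsto_const_nhds (x := K))
    rw [Real.sqrt_zero, zero_mul] at h
    exact h.mono_left nhdsWithin_le_nhds
  have t1 : Tendsto (fun δ => (γsel δ).1) (𝓝[>] (0:ℝ)) (𝓝 0) := by
    refine squeeze_zero_norm' ?_ hb
    filter_upwards [hmem] with δ hδ using (hbnd δ hδ).1
  have t2' : Tendsto (fun δ => (γsel δ).2 - β/σ) (𝓝[>] (0:ℝ)) (𝓝 0) := by
    refine squeeze_zero_norm' ?_ hb
    filter_upwards [hmem] with δ hδ using (hbnd δ hδ).2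
  have t2 : Tendsto (fun δ => (γsel δ).2) (𝓝[>] (0:ℝ)) (𝓝 (β/σ)) := by
    have := t2'.add (tendsto_const_nhds (x := β/σ))
    simpa using this
  refine ⟨t1, t2, ?_⟩
  have t3 := ((t1.pow 2).add (t2.pow 2)).const_mul (σ^2)
  have hval : σ^2 * ((0:ℝ)^2 + (β/σ)^2) = β^2 := by field_simp; ring
  rw [hval] at t3
  exact t3
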